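/- Unique solvability of the boundary value problem for the linearized gradient operator: for every T > 0 and every continuous map η : [−T,T] → ℝⁿ there exists a unique continuously differentiable map ζ : [−T,T] → ℝⁿ such that ζ′(s) + A ζ(s) = η(s) for all s ∈ [−T,T], p₊ζ(−T) = 0, and p₋ζ(T) = 0. -/

import Mathlib

open Set


noncomputable def sol (a c : ℝ) (g : ℝ → ℝ) (s : ℝ) : ℝ :=
  Real.exp (-(a * s)) * ∫ u in c..s, Real.exp (a * u) * g u

lemma sol_self (a c : ℝ) (g : ℝ → ℝ) : sol a c g c = 0 := by
  simp [sol]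

lemma sol_hasDerivAt (a c : ℝ) {g : ℝ → ℝ} (hg : Continuous g) (s : ℝ) :
    HasDerivAt (sol a c g) (g s - a * sol a c g s) s := by
  have hF : HasDerivAt (fun t => ∫ u in c..t, Real.exp (a * u) * g u)
      (Real.exp (a * s) * g s) s :=
    (((Real.continuous_exp.comp (continuous_const.mul continuous_id)).mul
      hg).integral_hasStrictDerivAt c s).hasDerivAt
  have hE : HasDerivAt (fun t => Real.exp (-(a * t))) (Real.exp (-(a * s)) * (-a)) s := by
    simpa using ((hasDerivAt_id s).const_mul (-a)).exp
  have := hE.mul hF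
  convert this using 1
  · rfl
  · rfl
  · rfl
  have h1 : Real.exp (-(a * s)) * Real.exp (a * s) = 1 := by
    rw [← Real.exp_add]; simp
  simp only [sol]
  linear_combination (-(g s)) * h1

lemma sol_continuous (a c : ℝ) {g : ℝ → ℝ} (hg : Continuous g) :
    Continuous (sol a c g) := by
  have : ∀ s, HasDerivAt (sol a c g) (g s - a * sol a c g s) s :=
    sol_hasDerivAt a c hg
  exact continuous_iff_continuousAt.2 fun s => (this s).continuousAt

lemma exp_mul_const {T a : ℝ} {z zd : ℝ → ℝ}
    (hz : ∀ s ∈ Icc (-T) T, HasDerivWithinAt z (zd s) (Icc (-T) T) s)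
    (heq : ∀ s ∈ Icc (-T) T, zd s = -(a * z s)) :
    ∀ s ∈ Icc (-T) T, Real.exp (a * s) * z s = Real.exp (a * (-T)) * z (-T) := by
  set w : ℝ → ℝ := fun t => Real.exp (a * t) * z t with hw
  have hcont : ContinuousOn w (Icc (-T) T) := by
    apply ContinuousOn.mul
    · exact (Real.continuous_exp.comp (continuous_const.mul continuous_id)).continuousOn
    · exact fun s hs => (hz s hs).continuousWithinAt
  have hder : ∀ x ∈ Ico (-T) T, HasDerivWithinAt w 0 (Ici x) x := by
    intro x hx
    have hx' : x ∈ Icc (-T) T := Ico_subset_Icc_self hx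
    have hE : HasDerivAt (fun t => Real.exp (a * t)) (Real.exp (a * x) * a) x := by
      simpa using ((hasDerivAt_id x).const_mul a).exp
    have := (hE.hasDerivWithinAt.mul (hz x hx'))
    have h0 : HasDerivWithinAt w 0 (Icc (-T) T) x := by
      convert this using 1
      · rfl
      · rfl
      · rfl
      rw [heq x hx']; ring
    exact h0.mono_of_mem_nhdsWithin (Icc_mem_nhdsGE_of_mem hx)
  intro s hs
  exact constant_of_has_deriv_right_zero hcont hder s hs

/-- **Unique solvability of the boundary value problem for the linearized
gradient operator.** Let `A = diag(a₁,…,aₙ)` with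
`a₁ ≥ … ≥ a_{n-k} > 0 > a_{n-k+1} ≥ … ≥ aₙ`.  For every `T > 0` and every
continuous `η : [-T,T] → ℝⁿ` there is a unique continuously differentiable
`ζ : [-T,T] → ℝⁿ` with `ζ' + A ζ = η` on `[-T,T]`, `p₊ ζ(-T) = 0` and
`p₋ ζ(T) = 0`. -/
theorem bvp_unique_solvability (n k : ℕ) (hn : 1 ≤ n) (hkn : k ≤ n)
    (a : Fin n → ℝ)
    (ha_mono : ∀ i j : Fin n, i ≤ j → a j ≤ a i)
    (ha_pos : ∀ i : Fin n, (i : ℕ) < n - k → 0 < a i)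
    (ha_neg : ∀ i : Fin n, n - k ≤ (i : ℕ) → a i < 0)
    (T : ℝ) (hT : 0 < T)
    (η : ℝ → Fin n → ℝ) (hη : ContinuousOn η (Icc (-T) T)) :
    ∃ ζ ζd : ℝ → Fin n → ℝ,
      ((∀ s ∈ Icc (-T) T, HasDerivWithinAt ζ (ζd s) (Icc (-T) T) s) ∧
       ContinuousOn ζd (Icc (-T) T) ∧
       (∀ s ∈ Icc (-T) T, ∀ i : Fin n, ζd s i + a i * ζ s i = η s i) ∧
       (∀ i : Fin n, (i : ℕ) < n - k → ζ (-T) i = 0) ∧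
       (∀ i : Fin n, n - k ≤ (i : ℕ) → ζ T i = 0)) ∧
      (∀ ζ' ζ'd : ℝ → Fin n → ℝ,
        (∀ s ∈ Icc (-T) T, HasDerivWithinAt ζ' (ζ'd s) (Icc (-T) T) s) →
        ContinuousOn ζ'd (Icc (-T) T) →
        (∀ s ∈ Icc (-T) T, ∀ i : Fin n, ζ'd s i + a i * ζ' s i = η s i) →
        (∀ i : Fin n, (i : ℕ) < n - k → ζ' (-T) i = 0) →
        (∀ i : Fin n, n - k ≤ (i : ℕ) → ζ' T i = 0) →
        ∀ s ∈ Icc (-T) T, ζ' s = ζ s) := by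
  have hTT : (-T) ≤ T := by linarith
  set f : ℝ → Fin n → ℝ := IccExtend hTT ((Icc (-T) T).restrict η) with hfdef
  have hf : Continuous f :=
    (continuousOn_iff_continuous_restrict.1 hη).Icc_extend'
  have hfe : ∀ s ∈ Icc (-T) T, f s = η s := fun s hs => by
    simp [hfdef, IccExtend_of_mem hTT _ hs]
    rfl
  have hfi : ∀ i : Fin n, Continuous (fun t => f t i) :=
    fun i => (continuous_apply i).comp hf
  set c : Fin n → ℝ := fun i => if (i : ℕ) < n - k then -T else T with hcdef
  set ζ : ℝ → Fin n → ℝ := fun s i => sol (a i) (c i) (fun t => f t i) s with hζdef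
  set ζd : ℝ → Fin n → ℝ := fun s i => f s i - a i * ζ s i with hζddef
  have hζcont : ∀ i, Continuous (fun s => ζ s i) :=
    fun i => sol_continuous (a i) (c i) (hfi i)
  refine ⟨ζ, ζd, ⟨?_, ?_, ?_, ?_, ?_⟩, ?_⟩
  · intro s hs
    exact hasDerivWithinAt_pi.2 fun i =>
      (sol_hasDerivAt (a i) (c i) (hfi i) s).hasDerivWithinAt
  · exact (continuous_pi fun i =>
      ((hfi i).sub (continuous_const.mul (hζcont i)))).continuousOn
  · intro s hs i
    have := congrFun (hfe s hs) i
    simp only [hζddef]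
    linarith
  · intro i hi
    have : c i = -T := by simp [hcdef, hi]
    simpa [hζdef, this] using sol_self (a i) (c i) (fun t => f t i)
  · intro i hi
    have : c i = T := by simp [hcdef, Nat.not_lt.2 hi]
    simpa [hζdef, this] using sol_self (a i) (c i) (fun t => f t i)
  · intro ζ' ζ'd hder' hcont' heq' hbl' hbr' s hs
    funext i
    set z : ℝ → ℝ := fun t => ζ' t i - ζ t i with hzdef
    set zd : ℝ → ℝ := fun t => ζ'd t i - ζd t i with hzddef
    have hz : ∀ t ∈ Icc (-T) T, HasDerivWithinAt z (zd t) (Icc (-T) T) t := by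
      intro t ht
      exact ((hasDerivWithinAt_pi.1 (hder' t ht)) i).sub
        ((hasDerivWithinAt_pi.1 (hasDerivWithinAt_pi.2 fun j =>
          (sol_hasDerivAt (a j) (c j) (hfi j) t).hasDerivWithinAt :
          HasDerivWithinAt ζ (ζd t) (Icc (-T) T) t)) i)
    have hzeq : ∀ t ∈ Icc (-T) T, zd t = -(a i * z t) := by
      intro t ht
      have h1 := heq' t ht i
      have h2 : ζd t i + a i * ζ t i = η t i := by
        have := congrFun (hfe t ht) i
        simp only [hζddef]; linarith
      simp only [hzddef, hzdef]; linarith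
    have hconst := exp_mul_const hz hzeq
    have hmemT : T ∈ Icc (-T) T := ⟨hTT, le_refl T⟩
    have hmemmT : (-T) ∈ Icc (-T) T := ⟨le_refl _, hTT⟩
    have hw0 : Real.exp (a i * (-T)) * z (-T) = 0 := by
      rcases lt_or_ge (i : ℕ) (n - k) with hi | hi
      · have hzmT : z (-T) = 0 := by
          have h1 := hbl' i hi
          have hc : c i = -T := by simp [hcdef, hi]
          have h2 : ζ (-T) i = 0 := by
            simpa [hζdef, hc] using sol_self (a i) (c i) (fun t => f t i)
          simp [hzdef, h1, h2]
        simp [hzmT]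
      · have hzT : z T = 0 := by
          have h1 := hbr' i hi
          have hc : c i = T := by simp [hcdef, Nat.not_lt.2 hi]
          have h2 : ζ T i = 0 := by
            simpa [hζdef, hc] using sol_self (a i) (c i) (fun t => f t i)
          simp [hzdef, h1, h2]
        have := hconst T hmemT
        rw [hzT, mul_zero] at this
        exact this.symm
    have := hconst s hs
    rw [hw0] at this
    have hz0 : z s = 0 := by
      rcases mul_eq_zero.1 this with h | h
      · exact absurd h (Real.exp_ne_zero _)
      · exact h
    have : ζ' s i - ζ s i = 0 := hz0
    linarith
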